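/- arXiv:1804.10868 — 2 statements merged into one kernel-verified Lean document; each statement's English description precedes it below -/
import Mathlib

section
/- Let α ≥ 0. The α-harmonic Green function G_α(z,w) = −(1−z w̄)^α h(φ(z,w)) of the unit disc satisfies, for all z, w ∈ D with z ≠ w, the estimate |G_α(z,w)| ≤ 2^α (1−|z|²)^α · log( |(1−z̄w)/(z−w)|² ). -/
open Complex MeasureTheory Metric Real Set intervalIntegral

noncomputable section

/-- The open unit disc in the complex plane. -/
def unitDisc : Set ℂ := Metric.ball 0 1

/-- The unit circle in the complex plane. -/
def unitCircle : Set ℂ := Metric.sphere 0 1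

/-- The Wirtinger derivative `∂f/∂z = (1/2)(f_x - i f_y)`. -/
def wderiv (f : ℂ → ℂ) (z : ℂ) : ℂ :=
  (fderiv ℝ f z 1 - Complex.I * fderiv ℝ f z Complex.I) / 2

/-- The conjugate Wirtinger derivative `∂f/∂z̄ = (1/2)(f_x + i f_y)`. -/
def wderivBar (f : ℂ → ℂ) (z : ℂ) : ℂ :=
  (fderiv ℝ f z 1 + Complex.I * fderiv ℝ f z Complex.I) / 2

/-- `‖D_f(z)‖ = |f_z(z)| + |f_z̄(z)|`, the operator norm of the real Jacobian. -/
def jacNorm (f : ℂ → ℂ) (z : ℂ) : ℝ :=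
  ‖wderiv f z‖ + ‖wderivBar f z‖

/-- `f` is α-harmonic on the unit disc: `∂/∂z[(1-|z|²)^{-α} ∂f/∂z̄] = 0` on `𝔻`. -/
def IsAlphaHarmonic (α : ℝ) (f : ℂ → ℂ) : Prop :=
  ∀ z ∈ unitDisc,
    wderiv (fun w => (((1 - ‖w‖ ^ 2) ^ (-α) : ℝ) : ℂ) * wderivBar f w) z = 0

/-- The α-harmonic Poisson kernel `P_α(z) = (1-|z|²)^{α+1}/((1-z)(1-z̄)^{α+1})`. -/
def alphaPoissonKernel (α : ℝ) (z : ℂ) : ℂ :=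
  (((1 - ‖z‖ ^ 2) ^ (α + 1) : ℝ) : ℂ) /
    ((1 - z) * (1 - (starRingEnd ℂ) z) ^ ((α : ℂ) + 1))

/-- The Poisson-type integral `P_α[f*](z) = (1/2π) ∫₀^{2π} P_α(z e^{-iθ}) f*(e^{iθ}) dθ`. -/
def alphaPoissonIntegral (α : ℝ) (fstar : ℂ → ℂ) (z : ℂ) : ℂ :=
  (1 / (2 * Real.pi) : ℝ) • ∫ θ in (0:ℝ)..(2 * Real.pi),
    alphaPoissonKernel α (z * Complex.exp (-(θ : ℂ) * Complex.I)) *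
      fstar (Complex.exp ((θ : ℂ) * Complex.I))

/-- The ordinary Poisson kernel `P(z) = (1-|z|²)/|1-z|²`. -/
def poissonKernelR (z : ℂ) : ℝ := (1 - ‖z‖ ^ 2) / ‖1 - z‖ ^ 2

/-- `h(s) = ∫₀^s t^α/(1-t) dt`. -/
def greenH (α : ℝ) (s : ℝ) : ℝ := ∫ t in (0:ℝ)..s, t ^ α / (1 - t)

/-- `φ(z,w) = (1-|z|²)(1-|w|²)/|1 - z w̄|²`. -/
def greenPhi (z w : ℂ) : ℝ :=
  (1 - ‖z‖ ^ 2) * (1 - ‖w‖ ^ 2) /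
    ‖1 - z * (starRingEnd ℂ) w‖ ^ 2

/-- The α-harmonic Green function `G_α(z,w) = -(1 - z w̄)^α h(φ(z,w))`. -/
def greenFn (α : ℝ) (z w : ℂ) : ℂ :=
  -(1 - z * (starRingEnd ℂ) w) ^ (α : ℂ) * ((greenH α (greenPhi z w) : ℝ) : ℂ)

/-- `G[g](z) = ∫_𝔻 G_α(z,w) g(w) dA(w)` with `dA` the normalized area measure. -/
def greenIntegral (α : ℝ) (g : ℂ → ℂ) (z : ℂ) : ℂ :=
  (1 / Real.pi : ℝ) • ∫ w in unitDisc, greenFn α z w * g w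

/-- `‖f*‖_∞ = sup_{ζ ∈ 𝕋} |f*(ζ)|`. -/
def supCircle (fstar : ℂ → ℂ) : ℝ := ⨆ ζ ∈ unitCircle, ‖fstar ζ‖

/-- `‖g‖_∞ = sup_{z ∈ 𝔻} |g(z)|`. -/
def supDisc (g : ℂ → ℂ) : ℝ := ⨆ z ∈ unitDisc, ‖g z‖

/-- The Laplacian of a real-valued function: `Δu = u_{xx} + u_{yy}`. -/
def lapR (u : ℂ → ℝ) (z : ℂ) : ℝ :=
  fderiv ℝ (fun w => fderiv ℝ u w 1) z 1 +
    fderiv ℝ (fun w => fderiv ℝ u w Complex.I) z Complex.I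

lemma integrand_contOn (α : ℝ) (hα : 0 ≤ α) {s : ℝ} (hs1 : s < 1) :
    ContinuousOn (fun t : ℝ => t ^ α / (1 - t)) (Set.Icc 0 s) := by
  apply ContinuousOn.div
  · intro t _
    exact (Real.continuousAt_rpow_const t α (Or.inr hα)).continuousWithinAt
  · fun_prop
  · intro t ht
    have := ht.2
    intro h
    linarith [ht.2]

lemma greenH_nonneg (α : ℝ) (hα : 0 ≤ α) {s : ℝ} (hs0 : 0 ≤ s) (hs1 : s < 1) :
    0 ≤ greenH α s := by
  apply intervalIntegral.integral_nonneg hs0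
  intro t ht
  exact div_nonneg (Real.rpow_nonneg ht.1 α) (by linarith [ht.2])

lemma integral_one_div_one_sub {s : ℝ} (hs0 : 0 ≤ s) (hs1 : s < 1) :
    (∫ t in (0:ℝ)..s, 1 / (1 - t)) = -Real.log (1 - s) := by
  have h : ∀ t ∈ Set.uIcc (0:ℝ) s, HasDerivAt (fun u : ℝ => -Real.log (1 - u)) (1 / (1 - t)) t := by
    intro t ht
    rw [Set.uIcc_of_le hs0] at ht
    have h1t : (1:ℝ) - t ≠ 0 := by intro h; linarith [ht.2]
    have h1 : HasDerivAt (fun u : ℝ => 1 - u) (-1) t := (hasDerivAt_id t).const_sub 1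
    have h2 := (Real.hasDerivAt_log h1t).comp t h1
    have h3 := h2.neg
    rw [show (1:ℝ) / (1 - t) = -((1 - t)⁻¹ * -1) by ring]
    exact h3
  have hint : IntervalIntegrable (fun t : ℝ => 1 / (1 - t)) volume 0 s := by
    apply ContinuousOn.intervalIntegrable
    rw [Set.uIcc_of_le hs0]
    apply ContinuousOn.div continuousOn_const (by fun_prop)
    intro t ht h
    linarith [ht.2]
  rw [intervalIntegral.integral_eq_sub_of_hasDerivAt h hint]
  simp

lemma greenH_le (α : ℝ) (hα : 0 ≤ α) {s : ℝ} (hs0 : 0 ≤ s) (hs1 : s < 1) :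
    greenH α s ≤ s ^ α * -Real.log (1 - s) := by
  have hint1 : IntervalIntegrable (fun t : ℝ => t ^ α / (1 - t)) volume 0 s := by
    apply ContinuousOn.intervalIntegrable
    rw [Set.uIcc_of_le hs0]
    exact integrand_contOn α hα hs1
  have hint2 : IntervalIntegrable (fun t : ℝ => s ^ α * (1 / (1 - t))) volume 0 s := by
    apply ContinuousOn.intervalIntegrable
    rw [Set.uIcc_of_le hs0]
    apply ContinuousOn.mul continuousOn_const
    apply ContinuousOn.div continuousOn_const (by fun_prop)
    intro t ht h
    linarith [ht.2]
  have hmono : greenH α s ≤ ∫ t in (0:ℝ)..s, s ^ α * (1 / (1 - t)) := by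
    apply intervalIntegral.integral_mono_on hs0 hint1 hint2
    intro t ht
    have h1t : (0:ℝ) < 1 - t := by linarith [ht.2]
    rw [mul_one_div]
    have hts : t ^ α ≤ s ^ α := Real.rpow_le_rpow ht.1 ht.2 hα
    gcongr
  calc greenH α s ≤ ∫ t in (0:ℝ)..s, s ^ α * (1 / (1 - t)) := hmono
    _ = s ^ α * ∫ t in (0:ℝ)..s, 1 / (1 - t) := intervalIntegral.integral_const_mul _ _
    _ = s ^ α * -Real.log (1 - s) := by rw [integral_one_div_one_sub hs0 hs1]

set_option maxHeartbeats 1000000 in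
/-- estimate for the α-harmonic Green function. -/
theorem greenFn_abs_le
    (α : ℝ) (hα : 0 ≤ α) (z w : ℂ) (hz : z ∈ unitDisc) (hw : w ∈ unitDisc) (hzw : z ≠ w) :
    ‖greenFn α z w‖ ≤
      (2 : ℝ) ^ α * (1 - ‖z‖ ^ 2) ^ α *
        Real.log (‖(1 - (starRingEnd ℂ) z * w) / (z - w)‖ ^ 2) := by
  have hz1 : ‖z‖ < 1 := by simpa [unitDisc] using hz
  have hw1 : ‖w‖ < 1 := by simpa [unitDisc] using hw
  set A := ‖1 - z * (starRingEnd ℂ) w‖ with hA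
  have hzw1 : ‖z * (starRingEnd ℂ) w‖ < 1 := by
    rw [norm_mul, Complex.norm_conj]
    nlinarith [norm_nonneg z, norm_nonneg w]
  have hApos : 0 < A := by
    rw [hA]
    rw [norm_pos_iff]
    intro h
    have : z * (starRingEnd ℂ) w = 1 := by linear_combination -h
    rw [this] at hzw1
    simp at hzw1
  have hzwpos : 0 < ‖z - w‖ := by
    rw [norm_pos_iff]
    exact sub_ne_zero.mpr hzw
  -- key identity
  have key : A ^ 2 = (1 - ‖z‖ ^ 2) * (1 - ‖w‖ ^ 2) + ‖z - w‖ ^ 2 := by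
    have keyC : (((Complex.normSq (1 - z * (starRingEnd ℂ) w) : ℝ)) : ℂ) =
        (((1 - Complex.normSq z) * (1 - Complex.normSq w) + Complex.normSq (z - w) : ℝ) : ℂ) := by
      push_cast
      simp only [← Complex.mul_conj]
      simp only [map_sub, map_mul, map_one, Complex.conj_conj]
      ring
    have keyR : Complex.normSq (1 - z * (starRingEnd ℂ) w) =
        (1 - Complex.normSq z) * (1 - Complex.normSq w) + Complex.normSq (z - w) := by
      exact_mod_cast keyC
    rw [hA, Complex.sq_norm, Complex.sq_norm, Complex.sq_norm, Complex.sq_norm]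
    exact keyR
  set s := greenPhi z w with hsdef
  have hsval : s = (1 - ‖z‖ ^ 2) * (1 - ‖w‖ ^ 2) / A ^ 2 := rfl
  have hznn : (0:ℝ) < 1 - ‖z‖ ^ 2 := by nlinarith [norm_nonneg z]
  have hwnn : (0:ℝ) < 1 - ‖w‖ ^ 2 := by nlinarith [norm_nonneg w]
  have hprodpos : 0 < (1 - ‖z‖ ^ 2) * (1 - ‖w‖ ^ 2) := mul_pos hznn hwnn
  have hs0 : 0 ≤ s := by
    rw [hsval]
    exact le_of_lt (div_pos hprodpos (by positivity))
  have h1s : 1 - s = ‖z - w‖ ^ 2 / A ^ 2 := by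
    rw [hsval]
    field_simp
    linarith [key]
  have hs1 : s < 1 := by
    have : 0 < 1 - s := by
      rw [h1s]; positivity
    linarith
  -- the log argument
  have habsconj : ‖1 - (starRingEnd ℂ) z * w‖ = A := by
    rw [hA, ← Complex.norm_conj (1 - z * (starRingEnd ℂ) w)]
    congr 1
    simp [map_sub, map_mul]
  have hlogarg : ‖(1 - (starRingEnd ℂ) z * w) / (z - w)‖ ^ 2 =
      A ^ 2 / ‖z - w‖ ^ 2 := by
    rw [norm_div, habsconj, div_pow]
  have hloginv : Real.log (A ^ 2 / ‖z - w‖ ^ 2) = -Real.log (1 - s) := by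
    rw [h1s, Real.log_div (by positivity) (by positivity),
      Real.log_div (by positivity) (by positivity)]
    ring
  have hlognn : 0 ≤ -Real.log (1 - s) := by
    have h1 : 1 - s ≤ 1 := by linarith
    have := Real.log_nonpos (by linarith) h1
    linarith
  -- abs of greenFn
  have habsG : ‖greenFn α z w‖ = A ^ α * greenH α s := by
    rw [greenFn, norm_mul, norm_neg, norm_cpow_real, Complex.norm_real, Real.norm_eq_abs,
      _root_.abs_of_nonneg (greenH_nonneg α hα hs0 hs1)]
  -- main chain
  have hAs : A * s ≤ 2 * (1 - ‖z‖ ^ 2) := by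
    have hAls : A * s = (1 - ‖z‖ ^ 2) * ((1 - ‖w‖ ^ 2) / A) := by
      rw [hsval]
      field_simp
    have hAge : 1 - ‖w‖ ≤ A := by
      have h1 : (1:ℝ) - ‖z * (starRingEnd ℂ) w‖ ≤ A := by
        have := norm_sub_norm_le (1 : ℂ) (z * (starRingEnd ℂ) w)
        simpa [hA] using this
      have h2 : ‖z * (starRingEnd ℂ) w‖ ≤ ‖w‖ := by
        rw [norm_mul, Complex.norm_conj]
        nlinarith [norm_nonneg w, norm_nonneg z]
      linarith
    have hdiv : (1 - ‖w‖ ^ 2) / A ≤ 2 := by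
      rw [div_le_iff₀ hApos]
      nlinarith [norm_nonneg w]
    rw [hAls]
    calc (1 - ‖z‖ ^ 2) * ((1 - ‖w‖ ^ 2) / A)
        ≤ (1 - ‖z‖ ^ 2) * 2 := mul_le_mul_of_nonneg_left hdiv hznn.le
      _ = 2 * (1 - ‖z‖ ^ 2) := by ring
  calc ‖greenFn α z w‖ = A ^ α * greenH α s := habsG
    _ ≤ A ^ α * (s ^ α * -Real.log (1 - s)) := by
        apply mul_le_mul_of_nonneg_left (greenH_le α hα hs0 hs1) (Real.rpow_nonneg hApos.le α)
    _ = (A * s) ^ α * -Real.log (1 - s) := by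
        rw [Real.mul_rpow hApos.le hs0, mul_assoc]
    _ ≤ (2 * (1 - ‖z‖ ^ 2)) ^ α * -Real.log (1 - s) := by
        apply mul_le_mul_of_nonneg_right _ hlognn
        exact Real.rpow_le_rpow (by positivity) hAs hα
    _ = (2:ℝ) ^ α * (1 - ‖z‖ ^ 2) ^ α *
        Real.log (‖(1 - (starRingEnd ℂ) z * w) / (z - w)‖ ^ 2) := by
        rw [Real.mul_rpow (by norm_num) (by nlinarith), hlogarg, hloginv]
end
end

section
/- Let α ≥ 0, z ∈ D, and θ ∈ [0, 2π]. Then |∂/∂z [P_α(z e^{−iθ})]| + |∂/∂z̄ [P_α(z e^{−iθ})]| ≤ (α+1) 2^α ( |∂/∂z [P(z e^{−iθ})]| + |∂/∂z̄ [P(z e^{−iθ})]| ), where P(z) = (1−|z|²)/|1−z|² is the ordinary Poisson kernel and the derivatives are Wirtinger derivatives in z. -/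
open Complex MeasureTheory Metric Real Set intervalIntegral

noncomputable section

lemma wirtinger_two_var {H : ℂ × ℂ → ℂ} {f : ℂ → ℂ} {z d₁ d₂ : ℂ}
    (hd : DifferentiableAt ℂ H (z, (starRingEnd ℂ) z))
    (h₁ : HasDerivAt (fun a => H (a, (starRingEnd ℂ) z)) d₁ z)
    (h₂ : HasDerivAt (fun b => H (z, b)) d₂ ((starRingEnd ℂ) z))
    (hf : f =ᶠ[nhds z] fun ζ => H (ζ, (starRingEnd ℂ) ζ)) :
    wderiv f z = d₁ ∧ wderivBar f z = d₂ := by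
  set p : ℂ × ℂ := (z, (starRingEnd ℂ) z) with hp
  have hH : HasFDerivAt H (fderiv ℂ H p) p := hd.hasFDerivAt
  set D := fderiv ℂ H p with hDdef
  have e₁ : D (1, 0) = d₁ := by
    have hg : HasDerivAt (fun a : ℂ => (a, (starRingEnd ℂ) z)) ((1 : ℂ), (0 : ℂ)) z :=
      (hasDerivAt_id z).prodMk (hasDerivAt_const _ _)
    exact (hH.comp_hasDerivAt z hg).unique h₁
  have e₂ : D (0, 1) = d₂ := by
    have hg : HasDerivAt (fun b : ℂ => (z, b)) ((0 : ℂ), (1 : ℂ)) ((starRingEnd ℂ) z) :=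
      (hasDerivAt_const _ _).prodMk (hasDerivAt_id _)
    exact (hH.comp_hasDerivAt _ hg).unique h₂
  have hJ : HasFDerivAt (fun ζ : ℂ => (ζ, (starRingEnd ℂ) ζ))
      ((ContinuousLinearMap.id ℝ ℂ).prod (Complex.conjCLE : ℂ →L[ℝ] ℂ)) z :=
    (hasFDerivAt_id z).prodMk Complex.conjCLE.hasFDerivAt
  have hcomp : HasFDerivAt (fun ζ : ℂ => H (ζ, (starRingEnd ℂ) ζ))
      (((D.restrictScalars ℝ)).comp
        ((ContinuousLinearMap.id ℝ ℂ).prod (Complex.conjCLE : ℂ →L[ℝ] ℂ))) z :=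
    (hH.restrictScalars ℝ).comp z hJ
  have hf' := hcomp.congr_of_eventuallyEq hf
  have hv : ∀ v : ℂ, fderiv ℝ f z v = D (v, (starRingEnd ℂ) v) := by
    intro v
    rw [hf'.fderiv]
    rfl
  have hlin : ∀ v w : ℂ, D (v, w) = v * d₁ + w * d₂ := by
    intro v w
    have hvw : (v, w) = v • ((1 : ℂ), (0 : ℂ)) + w • ((0 : ℂ), (1 : ℂ)) := by
      simp [Prod.ext_iff]
    rw [hvw, map_add, D.map_smul, D.map_smul, e₁, e₂, smul_eq_mul, smul_eq_mul]
  constructor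
  · unfold wderiv
    rw [hv, hv, hlin, hlin]
    simp only [map_one, Complex.conj_I]
    linear_combination (d₂ - d₁) / 2 * Complex.I_sq
  · unfold wderivBar
    rw [hv, hv, hlin, hlin]
    simp only [map_one, Complex.conj_I]
    linear_combination (d₁ - d₂) / 2 * Complex.I_sq

lemma hasDerivAt_A (α : ℝ) (c z : ℂ)
    (hN : (1 - z * (starRingEnd ℂ) z) ∈ slitPlane)
    (hA : (1 - c * z) ≠ 0) (hB : (1 - (starRingEnd ℂ) c * (starRingEnd ℂ) z) ≠ 0) :
    HasDerivAt (fun a : ℂ => (1 - a * (starRingEnd ℂ) z) ^ ((α : ℂ) + 1) /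
        ((1 - c * a) * (1 - (starRingEnd ℂ) c * (starRingEnd ℂ) z) ^ ((α : ℂ) + 1)))
      ((1 - z * (starRingEnd ℂ) z) ^ (α : ℂ) *
          (c * (1 - z * (starRingEnd ℂ) z) - ((α : ℂ) + 1) * (starRingEnd ℂ) z * (1 - c * z)) /
        ((1 - c * z) ^ 2 * (1 - (starRingEnd ℂ) c * (starRingEnd ℂ) z) ^ ((α : ℂ) + 1))) z := by
  set b := (starRingEnd ℂ) z
  set B := (1 - (starRingEnd ℂ) c * b)
  have hNne : (1 - z * b) ≠ 0 := Complex.slitPlane_ne_zero hN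
  have hBk : B ^ ((α : ℂ) + 1) ≠ 0 := by
    simp [Complex.cpow_eq_zero_iff, hB]
  have hnum : HasDerivAt (fun a : ℂ => (1 - a * b) ^ ((α : ℂ) + 1))
      (((α : ℂ) + 1) * (1 - z * b) ^ (((α : ℂ) + 1) - 1) * (-(1 * b))) z :=
    (((hasDerivAt_id z).mul_const b).const_sub 1).cpow_const hN
  have hden : HasDerivAt (fun a : ℂ => (1 - c * a) * B ^ ((α : ℂ) + 1))
      ((-(c * 1)) * B ^ ((α : ℂ) + 1)) z :=
    (((hasDerivAt_id z).const_mul c).const_sub 1).mul_const _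
  have hden0 : (1 - c * z) * B ^ ((α : ℂ) + 1) ≠ 0 := mul_ne_zero hA hBk
  have h := hnum.div hden hden0
  refine h.congr_deriv (Eq.symm ?_)
  have hsplit : (1 - z * b) ^ ((α : ℂ) + 1) = (1 - z * b) ^ (α : ℂ) * (1 - z * b) := by
    rw [Complex.cpow_add _ _ hNne, Complex.cpow_one]
  rw [add_sub_cancel_right, hsplit]
  field_simp
  ring

lemma hasDerivAt_B (α : ℝ) (c z : ℂ)
    (hN : (1 - z * (starRingEnd ℂ) z) ∈ slitPlane)
    (hA : (1 - c * z) ≠ 0)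
    (hBs : (1 - (starRingEnd ℂ) c * (starRingEnd ℂ) z) ∈ slitPlane) :
    HasDerivAt (fun w : ℂ => (1 - z * w) ^ ((α : ℂ) + 1) /
        ((1 - c * z) * (1 - (starRingEnd ℂ) c * w) ^ ((α : ℂ) + 1)))
      (((α : ℂ) + 1) * (1 - z * (starRingEnd ℂ) z) ^ (α : ℂ) * ((starRingEnd ℂ) c - z) /
        ((1 - c * z) * (1 - (starRingEnd ℂ) c * (starRingEnd ℂ) z) ^ ((α : ℂ) + 2)))
      ((starRingEnd ℂ) z) := by
  set b := (starRingEnd ℂ) z with hbdef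
  set e := (starRingEnd ℂ) c with hedef
  set B := (1 - e * b) with hBdef
  have hB : B ≠ 0 := Complex.slitPlane_ne_zero hBs
  have hNne : (1 - z * b) ≠ 0 := Complex.slitPlane_ne_zero hN
  have hBk : B ^ ((α : ℂ) + 1) ≠ 0 := by simp [Complex.cpow_eq_zero_iff, hB]
  have hnum : HasDerivAt (fun w : ℂ => (1 - z * w) ^ ((α : ℂ) + 1))
      (((α : ℂ) + 1) * (1 - z * b) ^ (((α : ℂ) + 1) - 1) * (-(z * 1))) b :=
    (((hasDerivAt_id b).const_mul z).const_sub 1).cpow_const hN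
  have hden : HasDerivAt (fun w : ℂ => (1 - c * z) * (1 - e * w) ^ ((α : ℂ) + 1))
      ((1 - c * z) * (((α : ℂ) + 1) * B ^ (((α : ℂ) + 1) - 1) * (-(e * 1)))) b :=
    ((((hasDerivAt_id b).const_mul e).const_sub 1).cpow_const hBs).const_mul _
  have hden0 : (1 - c * z) * B ^ ((α : ℂ) + 1) ≠ 0 := mul_ne_zero hA hBk
  have h := hnum.div hden hden0
  refine h.congr_deriv (Eq.symm ?_)
  have hsplitN : (1 - z * b) ^ ((α : ℂ) + 1) = (1 - z * b) ^ (α : ℂ) * (1 - z * b) := by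
    rw [Complex.cpow_add _ _ hNne, Complex.cpow_one]
  have hsplitB1 : B ^ ((α : ℂ) + 1) = B ^ (α : ℂ) * B := by
    rw [Complex.cpow_add _ _ hB, Complex.cpow_one]
  have hsplitB2 : B ^ ((α : ℂ) + 2) = B ^ (α : ℂ) * B ^ 2 := by
    have h2 : ((α : ℂ) + 2) = (α : ℂ) + ((2 : ℕ) : ℂ) := by push_cast; ring
    rw [h2, Complex.cpow_add _ _ hB, Complex.cpow_natCast]
  have hBkα : B ^ (α : ℂ) ≠ 0 := by
    intro h0
    exact hB ((Complex.cpow_eq_zero_iff B ((α : ℂ))).1 h0).1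
  rw [add_sub_cancel_right, hsplitN, hsplitB1, hsplitB2]
  field_simp
  ring

lemma hasDerivAt_A0 (c z : ℂ)
    (hA : (1 - c * z) ≠ 0) (hB : (1 - (starRingEnd ℂ) c * (starRingEnd ℂ) z) ≠ 0) :
    HasDerivAt (fun a : ℂ => (1 - a * (starRingEnd ℂ) z) /
        ((1 - c * a) * (1 - (starRingEnd ℂ) c * (starRingEnd ℂ) z)))
      ((c - (starRingEnd ℂ) z) /
        ((1 - c * z) ^ 2 * (1 - (starRingEnd ℂ) c * (starRingEnd ℂ) z))) z := by
  set b := (starRingEnd ℂ) z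
  set B := (1 - (starRingEnd ℂ) c * b)
  have hnum : HasDerivAt (fun a : ℂ => 1 - a * b) (-(1 * b)) z :=
    ((hasDerivAt_id z).mul_const b).const_sub 1
  have hden : HasDerivAt (fun a : ℂ => (1 - c * a) * B) ((-(c * 1)) * B) z :=
    (((hasDerivAt_id z).const_mul c).const_sub 1).mul_const _
  have h := hnum.div hden (mul_ne_zero hA hB)
  refine h.congr_deriv (Eq.symm ?_)
  field_simp
  ring

lemma hasDerivAt_B0 (c z : ℂ)
    (hA : (1 - c * z) ≠ 0) (hB : (1 - (starRingEnd ℂ) c * (starRingEnd ℂ) z) ≠ 0) :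
    HasDerivAt (fun w : ℂ => (1 - z * w) / ((1 - c * z) * (1 - (starRingEnd ℂ) c * w)))
      (((starRingEnd ℂ) c - z) /
        ((1 - c * z) * (1 - (starRingEnd ℂ) c * (starRingEnd ℂ) z) ^ 2))
      ((starRingEnd ℂ) z) := by
  set b := (starRingEnd ℂ) z
  set e := (starRingEnd ℂ) c
  have hnum : HasDerivAt (fun w : ℂ => 1 - z * w) (-(z * 1)) b :=
    ((hasDerivAt_id b).const_mul z).const_sub 1
  have hden : HasDerivAt (fun w : ℂ => (1 - c * z) * (1 - e * w)) ((1 - c * z) * (-(e * 1))) b :=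
    (((hasDerivAt_id b).const_mul e).const_sub 1).const_mul _
  have h := hnum.div hden (mul_ne_zero hA hB)
  refine h.congr_deriv (Eq.symm ?_)
  field_simp
  ring

lemma key_ineq (α r u s X : ℝ) (hα : 0 ≤ α) (hr : 0 < r) (hu : 0 ≤ u)
    (hs1 : s ≤ 1) (hur : u ≤ 2 * r) (hX : X ≤ r * (1 + α * s)) :
    u ^ α * X / (r ^ 2 * r ^ (α + 1)) + (α + 1) * u ^ α * r / (r * r ^ (α + 2))
      ≤ (α + 1) * 2 ^ α * (r / (r ^ 2 * r) + r / (r * r ^ 2)) := by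
  have hrα : (0:ℝ) < r ^ α := Real.rpow_pos_of_pos hr α
  have h3 : r ^ (α + 1) = r ^ α * r := by
    rw [Real.rpow_add hr, Real.rpow_one]
  have h4 : r ^ (α + 2) = r ^ α * r ^ 2 := by
    rw [Real.rpow_add hr, Real.rpow_two]
  have hQ : u ^ α ≤ 2 ^ α * r ^ α := by
    rw [← Real.mul_rpow (by norm_num) hr.le]
    exact Real.rpow_le_rpow hu hur hα
  have huα : (0:ℝ) ≤ u ^ α := Real.rpow_nonneg hu α
  have eL : u ^ α * X / (r ^ 2 * r ^ (α + 1)) + (α + 1) * u ^ α * r / (r * r ^ (α + 2))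
      = (u ^ α * X + (α + 1) * u ^ α * r) / (r ^ α * r ^ 3) := by
    rw [h3, h4]
    field_simp
  have eR : (α + 1) * 2 ^ α * (r / (r ^ 2 * r) + r / (r * r ^ 2))
      = ((α + 1) * 2 ^ α * (2 * r ^ α * r)) / (r ^ α * r ^ 3) := by
    field_simp
    ring
  rw [eL, eR]
  have l1 : u ^ α * X ≤ u ^ α * (r * (1 + α * s)) := mul_le_mul_of_nonneg_left hX huα
  have l2 : α * s ≤ α := by nlinarith
  have l4 : u ^ α * r ≤ 2 ^ α * r ^ α * r := mul_le_mul_of_nonneg_right hQ hr.le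
  have hmain : u ^ α * X + (α + 1) * u ^ α * r ≤ (α + 1) * 2 ^ α * (2 * r ^ α * r) := by
    nlinarith [l1, l2, l4, mul_le_mul_of_nonneg_right l4 hα,
      mul_nonneg huα hr.le, mul_le_mul_of_nonneg_left l2 (mul_nonneg huα hr.le)]
  exact div_le_div_of_nonneg_right hmain (by positivity) |>.trans_eq rfl

/-- the Wirtinger derivatives of the α-harmonic Poisson kernel are
dominated by `(α+1)2^α` times those of the ordinary Poisson kernel. -/
theorem alphaPoissonKernel_derivs_le
    (α : ℝ) (hα : 0 ≤ α) (z : ℂ) (hz : z ∈ unitDisc)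
    (θ : ℝ) (hθ : θ ∈ Set.Icc (0 : ℝ) (2 * Real.pi)) :
    ‖wderiv (fun ζ => alphaPoissonKernel α (ζ * Complex.exp (-(θ : ℂ) * Complex.I))) z‖ +
        ‖wderivBar (fun ζ => alphaPoissonKernel α (ζ * Complex.exp (-(θ : ℂ) * Complex.I))) z‖ ≤
      (α + 1) * (2 : ℝ) ^ α *
        (‖wderiv (fun ζ =>
              ((poissonKernelR (ζ * Complex.exp (-(θ : ℂ) * Complex.I)) : ℝ) : ℂ)) z‖ +
          ‖wderivBar (fun ζ =>
              ((poissonKernelR (ζ * Complex.exp (-(θ : ℂ) * Complex.I)) : ℝ) : ℂ)) z‖) := by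
  have hz' : z ∈ Metric.ball (0:ℂ) 1 := hz
  have hz1 : ‖z‖ < 1 := by simpa using mem_ball_zero_iff.mp hz'
  set c : ℂ := Complex.exp (-(θ : ℂ) * Complex.I) with hcdef
  have hc1 : ‖c‖ = 1 := by
    rw [hcdef, Complex.norm_exp]
    simp
  have hcc : c * (starRingEnd ℂ) c = 1 := by
    rw [Complex.mul_conj, Complex.normSq_eq_norm_sq, hc1]
    norm_num
  have hcc' : (starRingEnd ℂ) c * c = 1 := by rw [mul_comm]; exact hcc
  have hNeq : 1 - z * (starRingEnd ℂ) z = ((1 - ‖z‖ ^ 2 : ℝ) : ℂ) := by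
    rw [Complex.mul_conj, Complex.normSq_eq_norm_sq]
    push_cast
    ring
  have hupos : (0:ℝ) < 1 - ‖z‖ ^ 2 := by nlinarith [norm_nonneg z]
  have hNslit : (1 - z * (starRingEnd ℂ) z) ∈ Complex.slitPlane := by
    rw [hNeq]
    exact Complex.ofReal_mem_slitPlane.mpr hupos
  have hA : (1 - c * z) ≠ 0 := by
    intro h
    have h1 : (1:ℂ) = c * z := by linear_combination h
    have h2 := congrArg (‖·‖) h1
    rw [norm_one, norm_mul, hc1, one_mul] at h2
    exact absurd h2.symm (ne_of_lt hz1)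
  have hBeq : (1 - (starRingEnd ℂ) c * (starRingEnd ℂ) z) = (starRingEnd ℂ) (1 - c * z) := by
    rw [map_sub, map_one, map_mul]
  have hB : (1 - (starRingEnd ℂ) c * (starRingEnd ℂ) z) ≠ 0 := by
    rw [hBeq]
    intro h
    apply hA
    have h2 := congrArg (starRingEnd ℂ) h
    simpa using h2
  have hBslit : (1 - (starRingEnd ℂ) c * (starRingEnd ℂ) z) ∈ Complex.slitPlane := by
    rw [Complex.mem_slitPlane_iff]
    left
    have h1 : (((starRingEnd ℂ) c * (starRingEnd ℂ) z).re)
        ≤ ‖(starRingEnd ℂ) c * (starRingEnd ℂ) z‖ := Complex.re_le_norm _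
    rw [norm_mul, Complex.norm_conj, Complex.norm_conj, hc1, one_mul] at h1
    simp only [Complex.sub_re, Complex.one_re]
    linarith
  set r : ℝ := ‖1 - c * z‖ with hrdef
  have hr : 0 < r := norm_pos_iff.mpr hA
  set u : ℝ := 1 - ‖z‖ ^ 2 with hudef
  have hball : Metric.ball (0:ℂ) 1 ∈ nhds z := Metric.isOpen_ball.mem_nhds hz'
  -- differentiability of the two-variable extensions
  have hd : DifferentiableAt ℂ (fun p : ℂ × ℂ => (1 - p.1 * p.2) ^ ((α : ℂ) + 1) /
      ((1 - c * p.1) * (1 - (starRingEnd ℂ) c * p.2) ^ ((α : ℂ) + 1)))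
      (z, (starRingEnd ℂ) z) := by
    have hnum : DifferentiableAt ℂ (fun p : ℂ × ℂ => (1 - p.1 * p.2) ^ ((α : ℂ) + 1))
        (z, (starRingEnd ℂ) z) :=
      ((differentiableAt_const 1).sub
        (differentiableAt_fst.mul differentiableAt_snd)).cpow (differentiableAt_const _) hNslit
    have hden : DifferentiableAt ℂ (fun p : ℂ × ℂ =>
        (1 - c * p.1) * (1 - (starRingEnd ℂ) c * p.2) ^ ((α : ℂ) + 1)) (z, (starRingEnd ℂ) z) :=
      ((differentiableAt_const 1).sub (differentiableAt_fst.const_mul c)).mul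
        (((differentiableAt_const 1).sub
          (differentiableAt_snd.const_mul ((starRingEnd ℂ) c))).cpow
            (differentiableAt_const _) hBslit)
    have hne : (1 - c * z) * (1 - (starRingEnd ℂ) c * (starRingEnd ℂ) z) ^ ((α : ℂ) + 1) ≠ 0 :=
      mul_ne_zero hA (by simp [Complex.cpow_eq_zero_iff, hB])
    exact (hnum.mul (hden.inv hne)).congr_of_eventuallyEq
      (Filter.Eventually.of_forall fun p => div_eq_mul_inv _ _)
  have hd0 : DifferentiableAt ℂ (fun p : ℂ × ℂ => (1 - p.1 * p.2) /
      ((1 - c * p.1) * (1 - (starRingEnd ℂ) c * p.2))) (z, (starRingEnd ℂ) z) := by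
    have hnum : DifferentiableAt ℂ (fun p : ℂ × ℂ => 1 - p.1 * p.2) (z, (starRingEnd ℂ) z) :=
      (differentiableAt_const 1).sub (differentiableAt_fst.mul differentiableAt_snd)
    have hden : DifferentiableAt ℂ (fun p : ℂ × ℂ =>
        (1 - c * p.1) * (1 - (starRingEnd ℂ) c * p.2)) (z, (starRingEnd ℂ) z) :=
      ((differentiableAt_const 1).sub (differentiableAt_fst.const_mul c)).mul
        ((differentiableAt_const 1).sub (differentiableAt_snd.const_mul ((starRingEnd ℂ) c)))
    exact (hnum.mul (hden.inv (mul_ne_zero hA hB))).congr_of_eventuallyEq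
      (Filter.Eventually.of_forall fun p => div_eq_mul_inv _ _)
  -- eventual equality for the α-kernel
  have hfeq : (fun ζ : ℂ => alphaPoissonKernel α (ζ * c)) =ᶠ[nhds z]
      (fun ζ : ℂ => (1 - ζ * (starRingEnd ℂ) ζ) ^ ((α : ℂ) + 1) /
        ((1 - c * ζ) * (1 - (starRingEnd ℂ) c * (starRingEnd ℂ) ζ) ^ ((α : ℂ) + 1))) := by
    filter_upwards [hball] with ζ hζ
    have hζ1 : ‖ζ‖ < 1 := by simpa using mem_ball_zero_iff.mp hζ
    have habs : ‖ζ * c‖ = ‖ζ‖ := by rw [norm_mul, hc1, mul_one]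
    unfold alphaPoissonKernel
    rw [habs]
    congr 1
    · rw [Complex.ofReal_cpow (by nlinarith [norm_nonneg ζ])]
      congr 1
      · rw [Complex.mul_conj, Complex.normSq_eq_norm_sq]
        push_cast
        ring
      · push_cast
        ring
    · rw [map_mul, mul_comm ζ c, mul_comm ((starRingEnd ℂ) ζ) ((starRingEnd ℂ) c)]
  -- eventual equality for the ordinary Poisson kernel
  have hfeq0 : (fun ζ : ℂ => ((poissonKernelR (ζ * c) : ℝ) : ℂ)) =ᶠ[nhds z]
      (fun ζ : ℂ => (1 - ζ * (starRingEnd ℂ) ζ) /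
        ((1 - c * ζ) * (1 - (starRingEnd ℂ) c * (starRingEnd ℂ) ζ))) := by
    filter_upwards [hball] with ζ hζ
    have habs : ‖ζ * c‖ = ‖ζ‖ := by rw [norm_mul, hc1, mul_one]
    unfold poissonKernelR
    rw [habs]
    have e1 : ((‖1 - ζ * c‖ ^ 2 : ℝ) : ℂ)
        = (1 - c * ζ) * (1 - (starRingEnd ℂ) c * (starRingEnd ℂ) ζ) := by
      rw [← Complex.normSq_eq_norm_sq, ← Complex.mul_conj, map_sub, map_one, map_mul]
      ring
    have e2 : ((1 - ‖ζ‖ ^ 2 : ℝ) : ℂ) = 1 - ζ * (starRingEnd ℂ) ζ := by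
      rw [Complex.mul_conj, Complex.normSq_eq_norm_sq]
      push_cast
      ring
    rw [Complex.ofReal_div, e1, e2]
  obtain ⟨hw1, hw2⟩ := wirtinger_two_var hd
    (hasDerivAt_A α c z hNslit hA hB) (hasDerivAt_B α c z hNslit hA hBslit) hfeq
  obtain ⟨hw01, hw02⟩ := wirtinger_two_var hd0
    (hasDerivAt_A0 c z hA hB) (hasDerivAt_B0 c z hA hB) hfeq0
  rw [hw1, hw2, hw01, hw02]
  -- absolute value computations
  have habsB : ‖1 - (starRingEnd ℂ) c * (starRingEnd ℂ) z‖ = r := by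
    rw [hBeq, Complex.norm_conj]
  have hc_z : ‖c - (starRingEnd ℂ) z‖ = r := by
    have h1 : c - (starRingEnd ℂ) z = c * (starRingEnd ℂ) (1 - c * z) := by
      rw [map_sub, map_one, map_mul]
      linear_combination ((starRingEnd ℂ) z) * hcc
    rw [h1, norm_mul, hc1, one_mul, Complex.norm_conj]
  have hcb_z : ‖(starRingEnd ℂ) c - z‖ = r := by
    have h1 : (starRingEnd ℂ) c - z = (starRingEnd ℂ) c * (1 - c * z) := by
      linear_combination z * hcc'
    rw [h1, norm_mul, Complex.norm_conj, hc1, one_mul]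
  have hNα : ‖(1 - z * (starRingEnd ℂ) z) ^ (α : ℂ)‖ = u ^ α := by
    rw [hNeq, Complex.norm_cpow_eq_rpow_re_of_pos hupos, Complex.ofReal_re]
  have hκcast : ((α : ℂ) + 1) = (((α + 1 : ℝ)) : ℂ) := by push_cast; ring
  have hκ2cast : ((α : ℂ) + 2) = (((α + 2 : ℝ)) : ℂ) := by push_cast; ring
  have hBκ : ‖(1 - (starRingEnd ℂ) c * (starRingEnd ℂ) z) ^ ((α : ℂ) + 1)‖
      = r ^ (α + 1) := by
    rw [hκcast, Complex.norm_cpow_real, habsB]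
  have hBκ2 : ‖(1 - (starRingEnd ℂ) c * (starRingEnd ℂ) z) ^ ((α : ℂ) + 2)‖
      = r ^ (α + 2) := by
    rw [hκ2cast, Complex.norm_cpow_real, habsB]
  have hκabs : ‖(α : ℂ) + 1‖ = α + 1 := by
    rw [hκcast, Complex.norm_real, Real.norm_eq_abs]
    exact _root_.abs_of_nonneg (by linarith)
  have hXbound : ‖c * (1 - z * (starRingEnd ℂ) z)
      - ((α : ℂ) + 1) * (starRingEnd ℂ) z * (1 - c * z)‖ ≤ r * (1 + α * ‖z‖) := by
    have hsplit : c * (1 - z * (starRingEnd ℂ) z) - ((α : ℂ) + 1) * (starRingEnd ℂ) z * (1 - c * z)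
        = (c - (starRingEnd ℂ) z) - (α : ℂ) * ((starRingEnd ℂ) z * (1 - c * z)) := by
      ring
    rw [hsplit]
    have htri : ‖(c - (starRingEnd ℂ) z) - (α : ℂ) * ((starRingEnd ℂ) z * (1 - c * z))‖
        ≤ ‖c - (starRingEnd ℂ) z‖
          + ‖(α : ℂ) * ((starRingEnd ℂ) z * (1 - c * z))‖ := by
      simpa [sub_eq_add_neg] using
        norm_add_le (c - (starRingEnd ℂ) z) (-((α : ℂ) * ((starRingEnd ℂ) z * (1 - c * z))))
    rw [hc_z, norm_mul, norm_mul, Complex.norm_real, Real.norm_eq_abs, Complex.norm_conj] at htri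
    calc ‖(c - (starRingEnd ℂ) z) - (α : ℂ) * ((starRingEnd ℂ) z * (1 - c * z))‖
        ≤ r + |α| * (‖z‖ * ‖1 - c * z‖) := htri
      _ = r * (1 + α * ‖z‖) := by
          rw [_root_.abs_of_nonneg hα, ← hrdef]
          ring
  simp only [norm_div, norm_mul, norm_pow]
  rw [hNα, hBκ, hBκ2, hκabs, hc_z, hcb_z, habsB]
  have h5 : 1 - ‖z‖ ≤ r := by
    have h6 := norm_sub_norm_le (1 : ℂ) (c * z)
    rw [norm_one, norm_mul,
      hc1, one_mul] at h6
    rw [hrdef]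
    exact h6
  have hur : u ≤ 2 * r := by
    rw [hudef]
    nlinarith [h5, hz1, norm_nonneg z]
  exact key_ineq α r u (‖z‖) _ hα hr hupos.le hz1.le hur hXbound
end
end
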